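/- Let p be prime and V ⊆ (Z/pZ)^r finite. Suppose that for every nonzero u ∈ (Z/pZ)^r the exponential sum satisfies |∑_{z ∈ V} e^{2πi (u·z)/p}| ≤ K. Let B = I_1 × ... × I_r be a box of intervals. Then ∑_{x ∈ (Z/pZ)^r} |N_{B_x}(V) - |V|·vol(B)/p^r|² ≤ K²·vol(B). -/

import Mathlib

open Finset

/-- The standard additive character `e_p(t) = e^{2πi t/p}` on `ZMod p`. -/
noncomputable def ep (p : ℕ) (t : ZMod p) : ℂ :=
  Complex.exp (2 * Real.pi * Complex.I * t.val / p)

/-- The interval `{a, a+1, ..., a+L-1}` of `L` consecutive residues mod `p`. -/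
def interval (p : ℕ) (a : ZMod p) (L : ℕ) : Finset (ZMod p) :=
  (Finset.range L).image fun m : ℕ => a + (m : ZMod p)

noncomputable def psi (p : ℕ) [NeZero p] : AddChar (ZMod p) ℂ :=
  AddChar.zmodChar p ((Complex.isPrimitiveRoot_exp p (NeZero.ne p)).pow_eq_one)

lemma psi_apply (p : ℕ) [NeZero p] (t : ZMod p) : psi p t = ep p t := by
  rw [psi, AddChar.zmodChar_apply, ep, ← Complex.exp_nat_mul]
  congr 1
  ring

lemma psi_primitive (p : ℕ) [NeZero p] : AddChar.IsPrimitive (psi p) :=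
  AddChar.zmodChar_primitive_of_primitive_root p (Complex.isPrimitiveRoot_exp p (NeZero.ne p))

lemma conj_psi (p : ℕ) [NeZero p] (t : ZMod p) :
    (starRingEnd ℂ) (psi p t) = psi p (-t) := by
  have h1 : psi p t * psi p (-t) = 1 := by
    rw [← AddChar.map_add_eq_mul, add_neg_cancel, AddChar.map_zero_eq_one]
  have h2 : psi p t * (starRingEnd ℂ) (psi p t) = 1 := by
    rw [psi_apply, ep, ← Complex.exp_conj, ← Complex.exp_add, ← Complex.exp_zero]
    congr 1
    have : (starRingEnd ℂ) (2 * (Real.pi:ℂ) * Complex.I * (t.val:ℂ) / (p:ℂ)) =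
        -(2 * (Real.pi:ℂ) * Complex.I * (t.val:ℂ) / (p:ℂ)) := by
      simp only [map_div₀, map_mul, map_ofNat, Complex.conj_I, Complex.conj_ofReal,
        Complex.conj_natCast]
      ring
    rw [this]; ring
  have hne : psi p t ≠ 0 := fun h => one_ne_zero (by rw [h, zero_mul] at h1; exact h1.symm)
  exact mul_left_cancel₀ hne (h2.trans h1.symm)

lemma map_sum' {p : ℕ} [NeZero p] {ι : Type*} (s : Finset ι) (f : ι → ZMod p) :
    psi p (∑ i ∈ s, f i) = ∏ i ∈ s, psi p (f i) := by
  induction s using Finset.cons_induction with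
  | empty => simp
  | cons a s ha ih => rw [Finset.sum_cons, Finset.prod_cons, AddChar.map_add_eq_mul, ih]

lemma orth1 (p : ℕ) [NeZero p] (u : ZMod p) :
    ∑ x : ZMod p, psi p (u * x) = if u = 0 then (p : ℂ) else 0 := by
  have := AddChar.sum_mulShift (ψ := psi p) u (psi_primitive p)
  simpa [mul_comm, ZMod.card p] using this

lemma orthR (p r : ℕ) [NeZero p] (u : Fin r → ZMod p) :
    ∑ x : Fin r → ZMod p, psi p (∑ i, u i * x i) =
      if u = 0 then (p : ℂ) ^ r else 0 := by
  calc ∑ x : Fin r → ZMod p, psi p (∑ i, u i * x i)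
      = ∑ x ∈ Fintype.piFinset (fun _ : Fin r => (univ : Finset (ZMod p))),
          ∏ i, psi p (u i * x i) := by
        rw [Fintype.piFinset_univ]
        exact Finset.sum_congr rfl fun x _ => map_sum' _ _
    _ = ∏ i, ∑ y : ZMod p, psi p (u i * y) := (Finset.prod_univ_sum (fun _ : Fin r => (univ : Finset (ZMod p))) (fun i y => psi p (u i * y))).symm
    _ = ∏ i, if u i = 0 then (p : ℂ) else 0 := Finset.prod_congr rfl fun i _ => orth1 p (u i)
    _ = if u = 0 then (p : ℂ) ^ r else 0 := by
        by_cases h : u = 0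
        · simp [h]
        · obtain ⟨i, hi⟩ := Function.ne_iff.mp h
          rw [if_neg h]
          exact Finset.prod_eq_zero (mem_univ i) (if_neg (by simpa using hi))

lemma parseval (p r : ℕ) [NeZero p] (E : Finset (Fin r → ZMod p)) (c : (Fin r → ZMod p) → ℂ) :
    ∑ x : Fin r → ZMod p, Complex.normSq (∑ u ∈ E, c u * psi p (-∑ i, u i * x i)) =
      (p : ℝ) ^ r * ∑ u ∈ E, Complex.normSq (c u) := by
  have harg : ∀ (u u' x : Fin r → ZMod p),
      (∑ i, (u' i - u i) * x i) = (∑ i, u' i * x i) + -(∑ i, u i * x i) := by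
    intro u u' x
    simp only [sub_mul]
    rw [Finset.sum_sub_distrib]
    ring
  have h : ((∑ x : Fin r → ZMod p,
        Complex.normSq (∑ u ∈ E, c u * psi p (-∑ i, u i * x i)) : ℝ) : ℂ) =
      (((p : ℝ) ^ r * ∑ u ∈ E, Complex.normSq (c u) : ℝ) : ℂ) := by
    push_cast
    calc ∑ x : Fin r → ZMod p, (Complex.normSq (∑ u ∈ E, c u * psi p (-∑ i, u i * x i)) : ℂ)
        = ∑ x : Fin r → ZMod p, (∑ u ∈ E, c u * psi p (-∑ i, u i * x i)) *
            (∑ u' ∈ E, (starRingEnd ℂ) (c u') * psi p (∑ i, u' i * x i)) := by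
          refine Finset.sum_congr rfl fun x _ => ?_
          rw [← Complex.mul_conj, map_sum]
          congr 1
          exact Finset.sum_congr rfl fun u' _ => by rw [map_mul, conj_psi, neg_neg]
      _ = ∑ u ∈ E, ∑ u' ∈ E, (c u * (starRingEnd ℂ) (c u')) *
            ∑ x : Fin r → ZMod p, psi p (∑ i, (u' i - u i) * x i) := by
          simp_rw [Finset.sum_mul_sum]
          rw [Finset.sum_comm]
          refine Finset.sum_congr rfl fun u _ => ?_
          rw [Finset.sum_comm]
          refine Finset.sum_congr rfl fun u' _ => ?_
          rw [Finset.mul_sum]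
          refine Finset.sum_congr rfl fun x _ => ?_
          rw [harg, AddChar.map_add_eq_mul]
          ring
      _ = ∑ u ∈ E, (c u * (starRingEnd ℂ) (c u)) * (p : ℂ) ^ r := by
          refine Finset.sum_congr rfl fun u hu => ?_
          have : ∀ u' ∈ E, (c u * (starRingEnd ℂ) (c u')) *
              (∑ x : Fin r → ZMod p, psi p (∑ i, (u' i - u i) * x i)) =
              if u' = u then (c u * (starRingEnd ℂ) (c u')) * (p : ℂ) ^ r else 0 := by
            intro u' _
            rw [orthR]
            by_cases h' : u' = u
            · rw [if_pos (by funext i; simp [h']), if_pos h']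
            · rw [if_neg h', if_neg, mul_zero]
              intro hc
              exact h' (sub_eq_zero.mp (by funext i; exact congrFun hc i))
          rw [Finset.sum_congr rfl this, Finset.sum_ite_eq' E u, if_pos hu]
      _ = (p : ℂ) ^ r * ∑ u ∈ E, (Complex.normSq (c u) : ℂ) := by
          rw [Finset.mul_sum]
          exact Finset.sum_congr rfl fun u _ => by rw [Complex.mul_conj]; ring
  exact_mod_cast h

lemma delta (p r : ℕ) [NeZero p] (y : Fin r → ZMod p) :
    ∑ u : Fin r → ZMod p, psi p (∑ i, u i * y i) = if y = 0 then (p : ℂ) ^ r else 0 := by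
  rw [← orthR p r y]
  exact Finset.sum_congr rfl fun u _ =>
    congrArg (psi p) (Finset.sum_congr rfl fun i _ => mul_comm _ _)

theorem stmt_10 (p r : ℕ) (hp : p.Prime) [NeZero p] (hr : 1 ≤ r)
    (V : Finset (Fin r → ZMod p)) (K : ℝ)
    (hK : ∀ u : Fin r → ZMod p, u ≠ 0 →
      ‖∑ z ∈ V, ep p (∑ i, u i * z i)‖ ≤ K)
    (a : Fin r → ZMod p) (L : Fin r → ℕ) (hL : ∀ i, L i ≤ p) :
    ∑ x : Fin r → ZMod p,
        |((V.filter fun v => ∀ i, v i - x i ∈ interval p (a i) (L i)).card : ℝ) -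
          (V.card : ℝ) * (∏ i, (L i : ℝ)) / (p : ℝ) ^ r| ^ 2 ≤
      K ^ 2 * ∏ i, (L i : ℝ) := by
  classical
  haveI : Fact (1 < p) := ⟨hp.one_lt⟩
  have hpR : (0 : ℝ) < (p : ℝ) := by exact_mod_cast hp.pos
  set B : Finset (Fin r → ZMod p) :=
    Fintype.piFinset fun i => interval p (a i) (L i) with hB
  have hIcard : ∀ i, (interval p (a i) (L i)).card = L i := by
    intro i
    rw [interval, Finset.card_image_of_injOn, Finset.card_range]
    intro m hm n hn h
    simp only [Finset.coe_range, Set.mem_Iio] at hm hn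
    have h2 : (m : ZMod p) = n := add_left_cancel h
    have h3 := congrArg ZMod.val h2
    rwa [ZMod.val_cast_of_lt (hm.trans_le (hL i)),
      ZMod.val_cast_of_lt (hn.trans_le (hL i))] at h3
  have hBcard : B.card = ∏ i, L i := by
    rw [hB, Fintype.card_piFinset]
    exact Finset.prod_congr rfl fun i _ => hIcard i
  have hprodL : (∏ i, (L i : ℝ)) = (B.card : ℝ) := by rw [hBcard]; push_cast; rfl
  have hppos : (0 : ℝ) < (p : ℝ) ^ r := by positivity
  have hpc : ((p : ℂ) ^ r) ≠ 0 :=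
    pow_ne_zero _ (Nat.cast_ne_zero.mpr (NeZero.ne p))
  set S : (Fin r → ZMod p) → ℂ := fun u => ∑ v ∈ V, psi p (∑ i, u i * v i) with hS
  set T : (Fin r → ZMod p) → ℂ := fun u => ∑ b ∈ B, psi p (-∑ i, u i * b i) with hT
  set E : Finset (Fin r → ZMod p) := Finset.univ.erase 0 with hE
  set G : (Fin r → ZMod p) → ℂ :=
    fun x => ∑ u ∈ E, (S u * T u) * psi p (-∑ i, u i * x i) with hG
  -- Fourier expansion of the counting function
  have hexp : ∀ x : Fin r → ZMod p,
      ((V.filter fun v => ∀ i, v i - x i ∈ interval p (a i) (L i)).card : ℂ) =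
        ((V.card : ℂ) * (B.card : ℂ) + G x) / (p : ℂ) ^ r := by
    intro x
    have step1 : ((V.filter fun v => ∀ i, v i - x i ∈ interval p (a i) (L i)).card : ℂ) =
        ∑ v ∈ V, ∑ b ∈ B, if (fun i => v i - x i) = b then (1 : ℂ) else 0 := by
      rw [Finset.card_filter]
      push_cast
      refine Finset.sum_congr rfl fun v _ => ?_
      rw [Finset.sum_ite_eq B (fun i => v i - x i) (fun _ => (1 : ℂ))]
      exact if_congr Fintype.mem_piFinset.symm rfl rfl
    have step2 : ∀ v b : Fin r → ZMod p,
        (if (fun i => v i - x i) = b then (1 : ℂ) else 0) =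
          (∑ u : Fin r → ZMod p, psi p (∑ i, u i * (v i - x i - b i))) / (p : ℂ) ^ r := by
      intro v b
      rw [delta]
      have hiff : ((fun i => v i - x i - b i) = 0) ↔ ((fun i => v i - x i) = b) := by
        constructor
        · intro h; funext i; exact sub_eq_zero.mp (congrFun h i)
        · intro h; funext i
          rw [show v i - x i = b i from congrFun h i]; simp
      by_cases h : (fun i => v i - x i) = b
      · rw [if_pos h, if_pos (hiff.mpr h), div_self hpc]
      · rw [if_neg h, if_neg (fun hc => h (hiff.mp hc)), zero_div]
    have key : ∀ u v b : Fin r → ZMod p,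
        psi p (∑ i, u i * (v i - x i - b i)) =
          psi p (∑ i, u i * v i) * psi p (-∑ i, u i * b i) * psi p (-∑ i, u i * x i) := by
      intro u v b
      rw [← AddChar.map_add_eq_mul, ← AddChar.map_add_eq_mul]
      congr 1
      simp only [mul_sub]
      rw [Finset.sum_sub_distrib, Finset.sum_sub_distrib]
      ring
    have hfac : ∀ u : Fin r → ZMod p,
        (S u * T u) * psi p (-∑ i, u i * x i) =
          ∑ v ∈ V, ∑ b ∈ B,
            psi p (∑ i, u i * v i) * psi p (-∑ i, u i * b i) * psi p (-∑ i, u i * x i) := by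
      intro u
      rw [hS, hT]
      rw [Finset.sum_mul_sum, Finset.sum_mul]
      exact Finset.sum_congr rfl fun v _ => by rw [Finset.sum_mul]
    have step3 : ((V.filter fun v => ∀ i, v i - x i ∈ interval p (a i) (L i)).card : ℂ) =
        (∑ u : Fin r → ZMod p, (S u * T u) * psi p (-∑ i, u i * x i)) / (p : ℂ) ^ r := by
      rw [step1]
      simp_rw [step2, key, ← Finset.sum_div]
      congr 1
      calc ∑ v ∈ V, ∑ b ∈ B, ∑ u : Fin r → ZMod p,
            psi p (∑ i, u i * v i) * psi p (-∑ i, u i * b i) * psi p (-∑ i, u i * x i)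
          = ∑ v ∈ V, ∑ u : Fin r → ZMod p, ∑ b ∈ B,
            psi p (∑ i, u i * v i) * psi p (-∑ i, u i * b i) * psi p (-∑ i, u i * x i) :=
            Finset.sum_congr rfl fun v _ => Finset.sum_comm
        _ = ∑ u : Fin r → ZMod p, ∑ v ∈ V, ∑ b ∈ B,
            psi p (∑ i, u i * v i) * psi p (-∑ i, u i * b i) * psi p (-∑ i, u i * x i) :=
            Finset.sum_comm
        _ = ∑ u : Fin r → ZMod p, (S u * T u) * psi p (-∑ i, u i * x i) :=
            Finset.sum_congr rfl fun u _ => (hfac u).symm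
    rw [step3]
    have h0 : (S 0 * T 0) * psi p (-∑ i, (0 : Fin r → ZMod p) i * x i) =
        (V.card : ℂ) * (B.card : ℂ) := by
      simp [hS, hT]
    rw [← Finset.add_sum_erase Finset.univ _ (Finset.mem_univ (0 : Fin r → ZMod p)), h0]
  -- pointwise identity for the real difference
  have hdiff : ∀ x : Fin r → ZMod p,
      |((V.filter fun v => ∀ i, v i - x i ∈ interval p (a i) (L i)).card : ℝ) -
          (V.card : ℝ) * (∏ i, (L i : ℝ)) / (p : ℝ) ^ r| ^ 2 =
        Complex.normSq (G x) / ((p : ℝ) ^ r) ^ 2 := by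
    intro x
    set d : ℝ := ((V.filter fun v => ∀ i, v i - x i ∈ interval p (a i) (L i)).card : ℝ) -
      (V.card : ℝ) * (∏ i, (L i : ℝ)) / (p : ℝ) ^ r with hd
    have hdC : (d : ℂ) = G x / (p : ℂ) ^ r := by
      rw [hd, hprodL]
      push_cast
      rw [hexp x]
      field_simp
      ring
    have h1 : |d| ^ 2 = Complex.normSq (d : ℂ) := by
      rw [Complex.normSq_ofReal, sq_abs, sq]
    rw [h1, hdC, Complex.normSq_div]
    congr 1
    rw [show ((p : ℂ) ^ r) = (((p : ℝ) ^ r : ℝ) : ℂ) by push_cast; ring,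
      Complex.normSq_ofReal, sq]
  rw [Finset.sum_congr rfl fun x _ => hdiff x, ← Finset.sum_div]
  have hGpar : ∑ x : Fin r → ZMod p, Complex.normSq (G x) =
      (p : ℝ) ^ r * ∑ u ∈ E, Complex.normSq (S u * T u) := by
    simp only [hG]
    exact parseval p r E fun u => S u * T u
  rw [hGpar]
  -- the exponential-sum bound
  have hK0 : 0 ≤ K := by
    have h1 : (fun _ : Fin r => (1 : ZMod p)) ≠ 0 := by
      intro h
      exact one_ne_zero (congrFun h ⟨0, hr⟩)
    exact le_trans (norm_nonneg _) (hK _ h1)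
  have hSb : ∀ u ∈ E, Complex.normSq (S u * T u) ≤ K ^ 2 * Complex.normSq (T u) := by
    intro u hu
    rw [Complex.normSq_mul]
    have hu0 : u ≠ 0 := (Finset.mem_erase.mp hu).1
    have hnorm : ‖S u‖ ≤ K := by
      have h := hK u hu0
      rw [hS]
      simpa [psi_apply] using h
    have h2 : Complex.normSq (S u) ≤ K ^ 2 := by
      calc Complex.normSq (S u) = ‖S u‖ ^ 2 := by
            rw [Complex.normSq_eq_norm_sq]
        _ ≤ K ^ 2 := pow_le_pow_left₀ (norm_nonneg _) hnorm 2
    exact mul_le_mul_of_nonneg_right h2 (Complex.normSq_nonneg _)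
  have hTpar : ∑ u : Fin r → ZMod p, Complex.normSq (T u) = (p : ℝ) ^ r * B.card := by
    have hpar := parseval p r B fun _ => (1 : ℂ)
    simp only [one_mul, Complex.normSq_one, Finset.sum_const, nsmul_eq_mul, mul_one] at hpar
    rw [← hpar]
    refine Finset.sum_congr rfl fun u _ => ?_
    rw [hT]
    congr 1
    refine Finset.sum_congr rfl fun b _ => ?_
    congr 2
    exact Finset.sum_congr rfl fun i _ => mul_comm _ _
  have hsum_le : ∑ u ∈ E, Complex.normSq (S u * T u) ≤ K ^ 2 * ((p : ℝ) ^ r * B.card) := by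
    calc ∑ u ∈ E, Complex.normSq (S u * T u)
        ≤ ∑ u ∈ E, K ^ 2 * Complex.normSq (T u) := Finset.sum_le_sum hSb
      _ = K ^ 2 * ∑ u ∈ E, Complex.normSq (T u) := (Finset.mul_sum _ _ _).symm
      _ ≤ K ^ 2 * ∑ u : Fin r → ZMod p, Complex.normSq (T u) := by
          refine mul_le_mul_of_nonneg_left ?_ (sq_nonneg K)
          exact Finset.sum_le_sum_of_subset_of_nonneg (Finset.subset_univ E)
            fun u _ _ => Complex.normSq_nonneg _
      _ = K ^ 2 * ((p : ℝ) ^ r * B.card) := by rw [hTpar]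
  calc ((p : ℝ) ^ r * ∑ u ∈ E, Complex.normSq (S u * T u)) / ((p : ℝ) ^ r) ^ 2
      ≤ ((p : ℝ) ^ r * (K ^ 2 * ((p : ℝ) ^ r * B.card))) / ((p : ℝ) ^ r) ^ 2 := by
        gcongr
    _ = K ^ 2 * ∏ i, (L i : ℝ) := by
        rw [hprodL]
        field_simp
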